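/- River satisfies independence of Smith-dominated alternatives: if River is equipped with a consistent tiebreaker function, then for every preference profile P and every alternative x ∈ A(P) ∖ Sm(P), the River winner set of P equals the River winner set of P_{−x}. -/

import Mathlib

/-! ## Preference profiles -/

/-- A preference profile: a finite set of voters, a finite set of alternatives,
and for each voter a (Boolean-valued) preference relation, `pref i x y` meaning
voter `i` ranks `x` above `y`. -/
structure Profile (ν α : Type) where
  voters : Finset ν
  alts : Finset α
  pref : ν → α → α → Bool

namespace Profile

variable {ν α : Type}

/-- A profile is valid if there is at least one voter, at least two alternatives,
and every voter's preference is a strict linear order on the alternatives. -/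
def Valid (P : Profile ν α) : Prop :=
  P.voters.Nonempty ∧ 2 ≤ P.alts.card ∧
  (∀ i ∈ P.voters, ∀ a ∈ P.alts, ¬ P.pref i a a) ∧
  (∀ i ∈ P.voters, ∀ a ∈ P.alts, ∀ b ∈ P.alts, ∀ c ∈ P.alts,
      P.pref i a b → P.pref i b c → P.pref i a c) ∧
  (∀ i ∈ P.voters, ∀ a ∈ P.alts, ∀ b ∈ P.alts, a ≠ b → (P.pref i a b ↔ ¬ P.pref i b a))

/-- The majority margin of `x` over `y`. -/
def margin (P : Profile ν α) (x y : α) : ℤ :=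
  ((P.voters.filter (fun i => P.pref i x y)).card : ℤ) -
    ((P.voters.filter (fun i => P.pref i y x)).card : ℤ)

/-- The restriction of a profile to the alternatives other than `x`. -/
def restrict [DecidableEq α] (P : Profile ν α) (x : α) : Profile ν α :=
  ⟨P.voters, P.alts.erase x, P.pref⟩

/-- `y` Pareto-dominates `x`: every voter ranks `y` above `x`,
i.e. the margin of `y` over `x` equals the number of voters. -/
def ParetoDominates (P : Profile ν α) (y x : α) : Prop :=
  P.margin y x = P.voters.card

/-- A profile is uniquely weighted if no margin between distinct alternatives is zero and
distinct ordered pairs of distinct alternatives have distinct margins. -/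
def UniquelyWeighted (P : Profile ν α) : Prop :=
  (∀ x ∈ P.alts, ∀ y ∈ P.alts, x ≠ y → P.margin x y ≠ 0) ∧
  (∀ x ∈ P.alts, ∀ y ∈ P.alts, ∀ v ∈ P.alts, ∀ w ∈ P.alts,
      x ≠ y → v ≠ w → (x, y) ≠ (v, w) → P.margin x y ≠ P.margin v w)

end Profile

/-! ## Lists, precedence, tiebreakers -/

/-- `e` precedes `f` in the list `L`. -/
def Precedes {β : Type} (L : List β) (e f : β) : Prop :=
  ∃ l₁ l₂ l₃ : List β, L = l₁ ++ e :: (l₂ ++ f :: l₃)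

/-- A tiebreaker for a profile `P`: a linear order (list) of all ordered pairs of distinct
alternatives with nonnegative margin, in which pairs with strictly larger margin come first. -/
def IsTiebreaker {ν α : Type} (P : Profile ν α) (L : List (α × α)) : Prop :=
  L.Nodup ∧
  (∀ e : α × α, e ∈ L ↔ e.1 ∈ P.alts ∧ e.2 ∈ P.alts ∧ e.1 ≠ e.2 ∧ 0 ≤ P.margin e.1 e.2) ∧
  L.Pairwise (fun e f => P.margin f.1 f.2 ≤ P.margin e.1 e.2)

/-! ## The River method -/

open Classical in
/-- The River diagram: process the edges in the order given by `L`, adding an edge unless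
it would create a directed cycle or a second incoming edge at its target. -/
noncomputable def riverDiagram {α : Type} (L : List (α × α)) : Finset (α × α) :=
  L.foldl (fun E e =>
    if (∃ f ∈ E, f.2 = e.2) ∨ Relation.ReflTransGen (fun a b => (a, b) ∈ E) e.2 e.1
    then E else insert e E) ∅

open Classical in
/-- The River winners: the sources (vertices with no incoming edge) of the River diagram. -/
noncomputable def riverWinners {ν α : Type} (P : Profile ν α) (L : List (α × α)) : Finset α :=
  P.alts.filter (fun x => ∀ f ∈ riverDiagram L, f.2 ≠ x)

/-! ## Split Cycle -/

/-- The (cyclically) consecutive edges of a cycle given by a list of distinct vertices. -/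
def cycleEdges {α : Type} (c : List α) : List (α × α) := c.zip (c.rotate 1)

/-- A majority cycle: a cycle of distinct alternatives all of whose edges have positive margin. -/
def IsMajorityCycle {ν α : Type} (P : Profile ν α) (c : List α) : Prop :=
  c.Nodup ∧ (∀ a ∈ c, a ∈ P.alts) ∧ ∀ e ∈ cycleEdges c, 0 < P.margin e.1 e.2

/-- `e` is a splitting edge of some majority cycle: it attains the minimum margin on the cycle. -/
def IsSplittingEdge {ν α : Type} (P : Profile ν α) (e : α × α) : Prop :=
  ∃ c : List α, IsMajorityCycle P c ∧ e ∈ cycleEdges c ∧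
    ∀ f ∈ cycleEdges c, P.margin e.1 e.2 ≤ P.margin f.1 f.2

open Classical in
/-- The Split Cycle winners: alternatives with no incoming edge in the Split Cycle diagram,
whose edges are the positive-margin pairs that are not splitting edges of any majority cycle. -/
noncomputable def splitCycleWinners {ν α : Type} (P : Profile ν α) : Finset α :=
  P.alts.filter (fun x => ¬ ∃ y ∈ P.alts, 0 < P.margin y x ∧ ¬ IsSplittingEdge P (y, x))

/-! ## Ranked Pairs -/

/-- A processing order for Ranked Pairs: all pairs with positive margin,
ordered by decreasing margin. -/
def IsRPOrder {ν α : Type} (P : Profile ν α) (L : List (α × α)) : Prop :=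
  L.Nodup ∧
  (∀ e : α × α, e ∈ L ↔ e.1 ∈ P.alts ∧ e.2 ∈ P.alts ∧ 0 < P.margin e.1 e.2) ∧
  L.Pairwise (fun e f => P.margin f.1 f.2 ≤ P.margin e.1 e.2)

open Classical in
/-- The Ranked Pairs diagram: add each edge in order unless it would create a directed cycle. -/
noncomputable def rpDiagram {α : Type} (L : List (α × α)) : Finset (α × α) :=
  L.foldl (fun E e =>
    if Relation.ReflTransGen (fun a b => (a, b) ∈ E) e.2 e.1 then E else insert e E) ∅

open Classical in
/-- The Ranked Pairs winners: sources of the Ranked Pairs diagram. -/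
noncomputable def rpWinners {ν α : Type} (P : Profile ν α) (L : List (α × α)) : Finset α :=
  P.alts.filter (fun x => ∀ f ∈ rpDiagram L, f.2 ≠ x)

/-! ## Beat Path -/

/-- A majority path: a sequence of distinct alternatives with positive margins along it. -/
def IsMajorityPath {ν α : Type} (P : Profile ν α) (p : List α) : Prop :=
  p.Nodup ∧ (∀ a ∈ p, a ∈ P.alts) ∧ p.Chain' (fun a b => 0 < P.margin a b)

/-- `s_P(x,y)`: the maximum strength (minimum margin along the path) of a majority path
from `x` to `y`, and `0` if there is no such path. -/
noncomputable def beatPathStrength {ν α : Type} (P : Profile ν α) (x y : α) : ℤ :=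
  sSup ({0} ∪ {s : ℤ | ∃ p : List α, IsMajorityPath P p ∧ p.head? = some x ∧
    p.getLast? = some y ∧ ((p.zip p.tail).map (fun e => P.margin e.1 e.2)).min? = some s})

open Classical in
/-- The Beat Path winners. -/
noncomputable def beatPathWinners {ν α : Type} (P : Profile ν α) : Finset α :=
  P.alts.filter (fun x => ∀ y ∈ P.alts, y ≠ x →
    beatPathStrength P y x ≤ beatPathStrength P x y)

/-! ## Stable Voting -/

/-- Auxiliary, fuel-based definition of Stable Voting (for uniquely weighted profiles).
If only one alternative remains it wins; otherwise the winner is the alternative `x` of the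
first pair `(x,y)` (ordered by decreasing margin) with `m(x,y) > 0` and `x` a Split Cycle
winner, such that `x` is a Stable Voting winner of the profile without `y`. -/
noncomputable def svAux {ν α : Type} [DecidableEq α] : ℕ → Profile ν α → Set α
  | 0, P => ↑P.alts
  | (n+1), P =>
      if P.alts.card ≤ 1 then ↑P.alts
      else {x | x ∈ P.alts ∧ ∃ y ∈ P.alts, 0 < P.margin x y ∧ x ∈ splitCycleWinners P ∧
        x ∈ svAux n (P.restrict y) ∧
        ∀ x' ∈ P.alts, ∀ y' ∈ P.alts, 0 < P.margin x' y' → x' ∈ splitCycleWinners P →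
          P.margin x y < P.margin x' y' → x' ∉ svAux n (P.restrict y')}

/-- The Stable Voting winners (for uniquely weighted profiles). -/
noncomputable def svWinners {ν α : Type} [DecidableEq α] (P : Profile ν α) : Set α :=
  svAux P.alts.card P

/-! ## Smith set, covering, quasi-Pareto domination -/

/-- A dominant set of alternatives: nonempty, and each member defeats every non-member. -/
def IsDominant {ν α : Type} (P : Profile ν α) (X : Finset α) : Prop :=
  X.Nonempty ∧ X ⊆ P.alts ∧ ∀ x ∈ X, ∀ y ∈ P.alts, y ∉ X → 0 < P.margin x y

/-- The Smith set: the inclusion-minimal dominant set. -/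
def IsSmithSet {ν α : Type} (P : Profile ν α) (S : Finset α) : Prop :=
  IsDominant P S ∧ ∀ X : Finset α, IsDominant P X → S ⊆ X

/-- `y` covers `x`: `y` defeats `x` and does at least as well against every third alternative. -/
def Covers {ν α : Type} (P : Profile ν α) (y x : α) : Prop :=
  0 < P.margin y x ∧ ∀ z ∈ P.alts, z ≠ x → z ≠ y → P.margin x z ≤ P.margin y z

/-- `y` quasi-Pareto-dominates `x`. -/
def QuasiParetoDominates {ν α : Type} (P : Profile ν α) (y x : α) : Prop :=
  Covers P y x ∧ ∀ z ∈ P.alts, z ≠ x → z ≠ y →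
    P.margin z x ≤ P.margin y x ∧ P.margin x z ≤ P.margin y x

/-! ## Tiebreaker functions -/

/-- A consistent tiebreaker function: it assigns a tiebreaker to every profile, and the relative
order of two edges not involving `x` is unchanged when `x` is removed from the profile. -/
def IsConsistentTBF {ν α : Type} [DecidableEq α] (T : Profile ν α → List (α × α)) : Prop :=
  (∀ P : Profile ν α, IsTiebreaker P (T P)) ∧
  ∀ (P : Profile ν α) (x a b c d : α), x ∈ P.alts →
    x ≠ a → x ≠ b → x ≠ c → x ≠ d →
    (a, b) ∈ T P → (c, d) ∈ T P →
    (Precedes (T P) (a, b) (c, d) ↔ Precedes (T (P.restrict x)) (a, b) (c, d))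

/-- A Pareto-consistent tiebreaker function: consistent, and whenever `y` Pareto-dominates `x`,
the edge `(y,z)` precedes the edge `(x,z)` for every third alternative `z`. -/
def IsParetoConsistentTBF {ν α : Type} [DecidableEq α]
    (T : Profile ν α → List (α × α)) : Prop :=
  IsConsistentTBF T ∧
  ∀ (P : Profile ν α) (x y z : α), P.ParetoDominates y x →
    z ≠ x → z ≠ y → (y, z) ∈ T P → (x, z) ∈ T P → Precedes (T P) (y, z) (x, z)

/-- A quasi-Pareto-consistent tiebreaker function. -/
def IsQuasiParetoConsistentTBF {ν α : Type} [DecidableEq α]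
    (T : Profile ν α → List (α × α)) : Prop :=
  IsParetoConsistentTBF T ∧
  (∀ (P : Profile ν α) (x y y' : α),
      P.margin y x = P.margin y' x → QuasiParetoDominates P y x →
      ¬ QuasiParetoDominates P y' x →
      (y, x) ∈ T P → (y', x) ∈ T P → Precedes (T P) (y, x) (y', x)) ∧
  (∀ (P : Profile ν α) (x y z : α), QuasiParetoDominates P y x →
      ((x, z) ∈ T P → (y, z) ∈ T P → Precedes (T P) (y, z) (x, z)) ∧
      ((x, z) ∈ T P → (y, x) ∈ T P → Precedes (T P) (y, x) (x, z)))

/-- A tiebreaker for `P` induced by the fixed tie-breaking order `r` on pairs: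
edges are ordered by decreasing margin, ties in margin broken according to `r`. -/
def IsTiebreakerVia {ν α : Type} (r : α × α → α × α → Prop) (P : Profile ν α)
    (L : List (α × α)) : Prop :=
  IsTiebreaker P L ∧ ∀ e f : α × α, Precedes L e f →
    P.margin f.1 f.2 < P.margin e.1 e.2 ∨ (P.margin e.1 e.2 = P.margin f.1 f.2 ∧ r e f)

section RiverISDAAux

variable {ν α : Type}

lemma margin_neg (P : Profile ν α) (a b : α) : P.margin b a = - P.margin a b := by
  simp [Profile.margin]

lemma margin_restrict [DecidableEq α] (P : Profile ν α) (x a b : α) :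
    (P.restrict x).margin a b = P.margin a b := rfl

/-! ### Precedes lemmas -/

lemma precedes_mem {β : Type} {L : List β} {e f : β} (h : Precedes L e f) :
    e ∈ L ∧ f ∈ L := by
  obtain ⟨l1, l2, l3, rfl⟩ := h
  simp

lemma prec_asymm_aux {β : Type} :
    ∀ (l1 : List β) {e f : β} {l2 m1 m2 : List β}, (l1 ++ e :: l2).Nodup →
      l1 ++ e :: l2 = m1 ++ f :: m2 → f ∈ l2 → e ∈ m2 → False := by
  intro l1
  induction l1 with
  | nil =>
    intro e f l2 m1 m2 hnd heq hf he
    cases m1 with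
    | nil =>
      simp only [List.nil_append, List.cons.injEq] at heq
      obtain ⟨rfl, rfl⟩ := heq
      exact (List.nodup_cons.1 hnd).1 he
    | cons b m1' =>
      simp only [List.nil_append, List.cons_append, List.cons.injEq] at heq
      obtain ⟨rfl, rfl⟩ := heq
      exact (List.nodup_cons.1 hnd).1 (by simp [he])
  | cons a l1' ih =>
    intro e f l2 m1 m2 hnd heq hf he
    cases m1 with
    | nil =>
      simp only [List.cons_append, List.nil_append, List.cons.injEq] at heq
      obtain ⟨rfl, rfl⟩ := heq
      exact (List.nodup_cons.1 hnd).1 (by simp [hf])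
    | cons b m1' =>
      simp only [List.cons_append, List.cons.injEq] at heq
      exact ih (List.Nodup.of_cons hnd) heq.2 hf he

lemma prec_asymm {β : Type} {L : List β} {e f : β} (hnd : L.Nodup)
    (h1 : Precedes L e f) (h2 : Precedes L f e) : False := by
  obtain ⟨l1, l2, l3, rfl⟩ := h1
  obtain ⟨m1, m2, m3, heq⟩ := h2
  exact prec_asymm_aux l1 hnd heq (by simp) (by simp)

lemma prec_filter {β : Type} (p : β → Bool) {L : List β} {e f : β}
    (hpe : p e = true) (hpf : p f = true) (h : Precedes L e f) :
    Precedes (L.filter p) e f := by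
  obtain ⟨l1, l2, l3, rfl⟩ := h
  exact ⟨l1.filter p, l2.filter p, l3.filter p, by
    simp [List.filter_append, List.filter_cons, hpe, hpf]⟩

lemma list_eq_of_prec {β : Type} :
    ∀ (L1 L2 : List β), L1.Nodup → L2.Nodup → (∀ e, e ∈ L1 ↔ e ∈ L2) →
      (∀ e f, Precedes L1 e f → Precedes L2 e f) → L1 = L2 := by
  intro L1
  induction L1 with
  | nil =>
    intro L2 _ _ hmem _
    cases L2 with
    | nil => rfl
    | cons b t2 => exact absurd ((hmem b).2 (by simp)) (by simp)
  | cons a t ih =>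
    intro L2 hnd1 hnd2 hmem hprec
    cases L2 with
    | nil => exact absurd ((hmem a).1 (by simp)) (by simp)
    | cons b t2 =>
      by_cases hab : a = b
      · subst hab
        have hat : a ∉ t := (List.nodup_cons.1 hnd1).1
        have hat2 : a ∉ t2 := (List.nodup_cons.1 hnd2).1
        have htt : t = t2 := by
          apply ih t2 (List.Nodup.of_cons hnd1) (List.Nodup.of_cons hnd2)
          · intro e
            constructor
            · intro he
              have : e ∈ a :: t2 := (hmem e).1 (by simp [he])
              rcases List.mem_cons.1 this with rfl | h
              · exact absurd he hat
              · exact h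
            · intro he
              have : e ∈ a :: t := (hmem e).2 (by simp [he])
              rcases List.mem_cons.1 this with rfl | h
              · exact absurd he hat2
              · exact h
          · intro e f hef
            have he : e ∈ t := (precedes_mem hef).1
            have : Precedes (a :: t) e f := by
              obtain ⟨l1, l2, l3, rfl⟩ := hef
              exact ⟨a :: l1, l2, l3, rfl⟩
            have h2 : Precedes (a :: t2) e f := hprec _ _ this
            obtain ⟨l1, l2, l3, heq⟩ := h2
            cases l1 with
            | nil =>
              simp only [List.nil_append, List.cons.injEq] at heq
              exact absurd heq.1.symm (fun h => hat (h ▸ he))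
            | cons c l1' =>
              simp only [List.cons_append, List.cons.injEq] at heq
              exact ⟨l1', l2, l3, heq.2⟩
        rw [htt]
      · -- a ≠ b : derive contradiction
        have hbt : b ∈ t := by
          have : b ∈ a :: t := (hmem b).2 (by simp)
          rcases List.mem_cons.1 this with h | h
          · exact absurd h.symm hab
          · exact h
        have hat2 : a ∈ t2 := by
          have : a ∈ b :: t2 := (hmem a).1 (by simp)
          rcases List.mem_cons.1 this with h | h
          · exact absurd h hab
          · exact h
        obtain ⟨u, v, rfl⟩ := List.append_of_mem hbt
        obtain ⟨u', v', rfl⟩ := List.append_of_mem hat2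
        have hba : Precedes (b :: (u' ++ a :: v')) b a := ⟨[], u', v', rfl⟩
        have hab' : Precedes (a :: (u ++ b :: v)) a b := ⟨[], u, v, rfl⟩
        exact absurd (hprec _ _ hab') (fun h => prec_asymm hnd2 h hba)

end RiverISDAAux

section RiverFold

open Classical

variable {ν α : Type}

open Classical in
/-- One step of the River processing. -/
noncomputable def rstep {α : Type} (E : Finset (α × α)) (e : α × α) : Finset (α × α) :=
  if (∃ f ∈ E, f.2 = e.2) ∨ Relation.ReflTransGen (fun a b => (a, b) ∈ E) e.2 e.1
  then E else insert e E

lemma riverDiagram_eq {α : Type} (L : List (α × α)) :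
    riverDiagram L = L.foldl rstep ∅ := rfl

lemma subset_rstep {α : Type} (E : Finset (α × α)) (e : α × α) : E ⊆ rstep E e := by
  unfold rstep
  split
  · exact Finset.Subset.refl E
  · exact Finset.subset_insert e E

lemma mem_rstep {α : Type} {E : Finset (α × α)} {e f : α × α} (h : f ∈ rstep E e) :
    f = e ∨ f ∈ E := by
  unfold rstep at h
  split at h
  · exact Or.inr h
  · exact (Finset.mem_insert.1 h).imp id id

lemma foldl_rstep_subset {α : Type} :
    ∀ (l : List (α × α)) (E : Finset (α × α)), E ⊆ l.foldl rstep E := by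
  intro l
  induction l with
  | nil => intro E; exact Finset.Subset.refl E
  | cons a t ih =>
    intro E
    exact (subset_rstep E a).trans (ih (rstep E a))

lemma rstep_progress {α : Type} :
    ∀ (l : List (α × α)) (E : Finset (α × α)) (e : α × α), e ∈ l →
      (∃ f ∈ l.foldl rstep E, f.2 = e.2) ∨
        Relation.ReflTransGen (fun a b => (a, b) ∈ l.foldl rstep E) e.2 e.1 := by
  intro l
  induction l with
  | nil => intro E e he; simp at he
  | cons a t ih =>
    intro E e he
    rcases List.mem_cons.1 he with rfl | he'
    · have hsub : rstep E e ⊆ (e :: t).foldl rstep E := foldl_rstep_subset t (rstep E e)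
      by_cases hc : (∃ f ∈ E, f.2 = e.2) ∨
          Relation.ReflTransGen (fun a b => (a, b) ∈ E) e.2 e.1
      · rcases hc with ⟨f, hf, hf2⟩ | hpath
        · exact Or.inl ⟨f, hsub (subset_rstep E e hf), hf2⟩
        · refine Or.inr (Relation.ReflTransGen.mono ?_ _ _ hpath)
          intro u v huv
          exact hsub (subset_rstep E e huv)
      · refine Or.inl ⟨e, hsub ?_, rfl⟩
        unfold rstep
        rw [if_neg hc]
        exact Finset.mem_insert_self e E
    · exact ih (rstep E a) e he'

/-- If all edges with target in `S` have source in `S` and lie in `E'`, then any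
path in `E` ending in `S` starts in `S` and transfers to `E'`. -/
lemma path_transfer {α : Type} {S : Finset α} {E E' : Finset (α × α)}
    (hb : ∀ e ∈ E, e.2 ∈ S → e.1 ∈ S) (ha : ∀ e ∈ E, e.2 ∈ S → e ∈ E') {u v : α}
    (h : Relation.ReflTransGen (fun a b => (a, b) ∈ E) u v) :
    v ∈ S → u ∈ S ∧ Relation.ReflTransGen (fun a b => (a, b) ∈ E') u v := by
  induction h with
  | refl => intro hv; exact ⟨hv, Relation.ReflTransGen.refl⟩
  | tail h1 h2 ih =>
    intro hv
    have hwS := hb _ h2 hv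
    obtain ⟨hu, hp⟩ := ih hwS
    exact ⟨hu, hp.tail (ha _ h2 hv)⟩

/-- The invariant relating the River diagrams of the full and restricted profiles. -/
def RInv {α : Type} (S : Finset α) (E E' : Finset (α × α)) : Prop :=
  (∀ e : α × α, e.2 ∈ S → (e ∈ E ↔ e ∈ E')) ∧
  (∀ e ∈ E, e.2 ∈ S → e.1 ∈ S) ∧ (∀ e ∈ E', e.2 ∈ S → e.1 ∈ S)

lemma rinv_step_left {α : Type} {S : Finset α} {E E' : Finset (α × α)} {e : α × α}
    (he2 : e.2 ∉ S) (inv : RInv S E E') : RInv S (rstep E e) E' := by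
  obtain ⟨h1, h2, h3⟩ := inv
  refine ⟨?_, ?_, h3⟩
  · intro f hf
    constructor
    · intro hmem
      rcases mem_rstep hmem with rfl | hmem'
      · exact absurd hf he2
      · exact (h1 f hf).1 hmem'
    · intro hmem
      exact subset_rstep E e ((h1 f hf).2 hmem)
  · intro f hmem hf
    rcases mem_rstep hmem with rfl | hmem'
    · exact absurd hf he2
    · exact h2 f hmem' hf

lemma rinv_step_right {α : Type} {S : Finset α} {E E' : Finset (α × α)} {e : α × α}
    (he2 : e.2 ∉ S) (inv : RInv S E E') : RInv S E (rstep E' e) := by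
  obtain ⟨h1, h2, h3⟩ := inv
  refine ⟨?_, h2, ?_⟩
  · intro f hf
    constructor
    · intro hmem
      exact subset_rstep E' e ((h1 f hf).1 hmem)
    · intro hmem
      rcases mem_rstep hmem with rfl | hmem'
      · exact absurd hf he2
      · exact (h1 f hf).2 hmem'
  · intro f hmem hf
    rcases mem_rstep hmem with rfl | hmem'
    · exact absurd hf he2
    · exact h3 f hmem' hf

lemma rinv_step_both {α : Type} {S : Finset α} {E E' : Finset (α × α)} {e : α × α}
    (he1 : e.1 ∈ S) (he2 : e.2 ∈ S) (inv : RInv S E E') :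
    RInv S (rstep E e) (rstep E' e) := by
  obtain ⟨h1, h2, h3⟩ := inv
  have hcond : ((∃ f ∈ E, f.2 = e.2) ∨
      Relation.ReflTransGen (fun a b => (a, b) ∈ E) e.2 e.1) ↔
      ((∃ f ∈ E', f.2 = e.2) ∨
      Relation.ReflTransGen (fun a b => (a, b) ∈ E') e.2 e.1) := by
    constructor
    · rintro (⟨f, hf, hf2⟩ | hpath)
      · exact Or.inl ⟨f, (h1 f (hf2 ▸ he2)).1 hf, hf2⟩
      · exact Or.inr (path_transfer h2 (fun g hg hgS => (h1 g hgS).1 hg) hpath he1).2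
    · rintro (⟨f, hf, hf2⟩ | hpath)
      · exact Or.inl ⟨f, (h1 f (hf2 ▸ he2)).2 hf, hf2⟩
      · exact Or.inr (path_transfer h3 (fun g hg hgS => (h1 g hgS).2 hg) hpath he1).2
  by_cases hc : (∃ f ∈ E, f.2 = e.2) ∨
      Relation.ReflTransGen (fun a b => (a, b) ∈ E) e.2 e.1
  · unfold rstep
    rw [if_pos hc, if_pos (hcond.1 hc)]
    exact ⟨h1, h2, h3⟩
  · unfold rstep
    rw [if_neg hc, if_neg (fun h => hc (hcond.2 h))]
    refine ⟨?_, ?_, ?_⟩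
    · intro f hf
      simp only [Finset.mem_insert]
      exact or_congr Iff.rfl (h1 f hf)
    · intro f hmem hf
      rcases Finset.mem_insert.1 hmem with rfl | hmem'
      · exact he1
      · exact h2 f hmem' hf
    · intro f hmem hf
      rcases Finset.mem_insert.1 hmem with rfl | hmem'
      · exact he1
      · exact h3 f hmem' hf

lemma rinv_foldl {α : Type} (S : Finset α) (x : α) [DecidableEq α] :
    ∀ (l : List (α × α)), (∀ e ∈ l, e.2 ∈ S → (e.1 ∈ S ∧ e.1 ≠ x ∧ e.2 ≠ x)) →
      ∀ E E', RInv S E E' →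
        RInv S (l.foldl rstep E)
          ((l.filter fun e => decide (e.1 ≠ x ∧ e.2 ≠ x)).foldl rstep E') := by
  intro l
  induction l with
  | nil => intro _ E E' inv; exact inv
  | cons a t ih =>
    intro hl E E' inv
    have hl' : ∀ e ∈ t, e.2 ∈ S → (e.1 ∈ S ∧ e.1 ≠ x ∧ e.2 ≠ x) :=
      fun e he => hl e (List.mem_cons_of_mem a he)
    by_cases hpa : a.1 ≠ x ∧ a.2 ≠ x
    · have hfil : (a :: t).filter (fun e => decide (e.1 ≠ x ∧ e.2 ≠ x)) =
          a :: (t.filter fun e => decide (e.1 ≠ x ∧ e.2 ≠ x)) := by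
        simp [List.filter_cons, hpa]
      rw [hfil]
      show RInv S (t.foldl rstep (rstep E a)) _
      apply ih hl' (rstep E a) (rstep E' a)
      by_cases ha2 : a.2 ∈ S
      · exact rinv_step_both (hl a List.mem_cons_self ha2).1 ha2 inv
      · exact rinv_step_right ha2 (rinv_step_left ha2 inv)
    · have hfil : (a :: t).filter (fun e => decide (e.1 ≠ x ∧ e.2 ≠ x)) =
          (t.filter fun e => decide (e.1 ≠ x ∧ e.2 ≠ x)) := by
        simp only [List.filter_cons]
        rw [if_neg (by simpa using hpa)]
      rw [hfil]
      have ha2 : a.2 ∉ S := fun h => hpa ⟨(hl a List.mem_cons_self h).2.1,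
        (hl a List.mem_cons_self h).2.2⟩
      exact ih hl' (rstep E a) E' (rinv_step_left ha2 inv)

end RiverFold

/-! ## STATEMENT 2: River with a consistent tiebreaker function satisfies independence of
Smith-dominated alternatives -/

theorem river_ISDA {ν α : Type} [DecidableEq α] (T : Profile ν α → List (α × α))
    (hT : IsConsistentTBF T)
    (P : Profile ν α) (hP : P.Valid) (x : α) (hx : x ∈ P.alts)
    (S : Finset α) (hS : IsSmithSet P S) (hxS : x ∉ S) :
    riverWinners P (T P) = riverWinners (P.restrict x) (T (P.restrict x)) := by
  classical
  obtain ⟨⟨hSne, hSsub, hSbeat⟩, -⟩ := hS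
  have hmemL := (hT.1 P).2.1
  have hndL := (hT.1 P).1
  have hmemL' := (hT.1 (P.restrict x)).2.1
  have hndL' := (hT.1 (P.restrict x)).1
  -- every edge of `T P` with target in `S` has source in `S` (and avoids `x`)
  have hLmem : ∀ e ∈ T P, e.2 ∈ S → (e.1 ∈ S ∧ e.1 ≠ x ∧ e.2 ≠ x) := by
    intro e he h2
    obtain ⟨h1a, _, hne, hm⟩ := (hmemL e).1 he
    have h1S : e.1 ∈ S := by
      by_contra h1S
      have hpos := hSbeat e.2 h2 e.1 h1a h1S
      rw [margin_neg P e.2 e.1] at hm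
      omega
    exact ⟨h1S, fun h => hxS (h ▸ h1S), fun h => hxS (h ▸ h2)⟩
  -- the restricted tiebreaker is the filtered tiebreaker
  have hL'eq : T (P.restrict x) =
      (T P).filter (fun e => decide (e.1 ≠ x ∧ e.2 ≠ x)) := by
    apply list_eq_of_prec _ _ hndL' (hndL.filter _)
    · intro e
      rw [List.mem_filter, hmemL' e, hmemL e]
      have halts : (P.restrict x).alts = P.alts.erase x := rfl
      have hmar : (P.restrict x).margin e.1 e.2 = P.margin e.1 e.2 := rfl
      rw [halts, hmar]
      simp only [Finset.mem_erase, decide_eq_true_eq]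
      tauto
    · intro e f hef
      have heL' : e ∈ T (P.restrict x) := (precedes_mem hef).1
      have hfL' : f ∈ T (P.restrict x) := (precedes_mem hef).2
      obtain ⟨he1, he2, hene, hem⟩ := (hmemL' e).1 heL'
      obtain ⟨hf1, hf2, hfne, hfm⟩ := (hmemL' f).1 hfL'
      have he1' : e.1 ∈ P.alts.erase x := he1
      have he2' : e.2 ∈ P.alts.erase x := he2
      have hf1' : f.1 ∈ P.alts.erase x := hf1
      have hf2' : f.2 ∈ P.alts.erase x := hf2
      rw [Finset.mem_erase] at he1' he2' hf1' hf2'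
      have heL : e ∈ T P := (hmemL e).2 ⟨he1'.2, he2'.2, hene, hem⟩
      have hfL : f ∈ T P := (hmemL f).2 ⟨hf1'.2, hf2'.2, hfne, hfm⟩
      have hprec : Precedes (T P) e f :=
        (hT.2 P x e.1 e.2 f.1 f.2 hx he1'.1.symm he2'.1.symm hf1'.1.symm hf2'.1.symm
          heL hfL).2 hef
      exact prec_filter _ (by simp [he1'.1, he2'.1]) (by simp [hf1'.1, hf2'.1]) hprec
  -- the invariant between the two diagrams
  have hInv : RInv S (riverDiagram (T P)) (riverDiagram (T (P.restrict x))) := by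
    rw [riverDiagram_eq, riverDiagram_eq, hL'eq]
    exact rinv_foldl S x (T P) hLmem ∅ ∅ ⟨fun e _ => Iff.rfl, by simp, by simp⟩
  -- every alternative outside `S` has an incoming edge in the full diagram
  have hIncoming : ∀ z ∈ P.alts, z ∉ S → ∃ f ∈ riverDiagram (T P), f.2 = z := by
    intro z hz hzS
    obtain ⟨s, hsS⟩ := hSne
    have hsz : (s, z) ∈ T P := (hmemL (s, z)).2 ⟨hSsub hsS, hz, fun h => hzS ((show s = z from h) ▸ hsS),
      le_of_lt (hSbeat s hsS z hz hzS)⟩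
    rcases rstep_progress (T P) ∅ (s, z) hsz with h | h
    · rw [riverDiagram_eq]; exact h
    · exfalso
      have hb : ∀ e ∈ (T P).foldl rstep ∅, e.2 ∈ S → e.1 ∈ S := by
        rw [← riverDiagram_eq]; exact hInv.2.1
      exact hzS (path_transfer hb (fun e he _ => he) h hsS).1
  -- likewise in the restricted diagram
  have hIncoming' : ∀ z ∈ P.alts, z ≠ x → z ∉ S →
      ∃ f ∈ riverDiagram (T (P.restrict x)), f.2 = z := by
    intro z hz hzx hzS
    obtain ⟨s, hsS⟩ := hSne
    have hsx : s ≠ x := fun h => hxS (h ▸ hsS)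
    have hsz : (s, z) ∈ T (P.restrict x) := by
      apply (hmemL' (s, z)).2
      refine ⟨?_, ?_, fun h => hzS ((show s = z from h) ▸ hsS), ?_⟩
      · exact Finset.mem_erase.2 ⟨hsx, hSsub hsS⟩
      · exact Finset.mem_erase.2 ⟨hzx, hz⟩
      · exact le_of_lt (hSbeat s hsS z hz hzS)
    rcases rstep_progress (T (P.restrict x)) ∅ (s, z) hsz with h | h
    · rw [riverDiagram_eq]; exact h
    · exfalso
      have hb : ∀ e ∈ (T (P.restrict x)).foldl rstep ∅, e.2 ∈ S → e.1 ∈ S := by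
        rw [← riverDiagram_eq]; exact hInv.2.2
      exact hzS (path_transfer hb (fun e he _ => he) h hsS).1
  -- conclude
  ext z
  simp only [riverWinners, Finset.mem_filter]
  constructor
  · rintro ⟨hz, hno⟩
    have hzS : z ∈ S := by
      by_contra hzS
      obtain ⟨f, hf, hf2⟩ := hIncoming z hz hzS
      exact hno f hf hf2
    have hzx : z ≠ x := fun h => hxS (h ▸ hzS)
    refine ⟨Finset.mem_erase.2 ⟨hzx, hz⟩, ?_⟩
    intro f hf hf2
    have hfS : f.2 ∈ S := by rw [hf2]; exact hzS
    exact hno f ((hInv.1 f hfS).2 hf) hf2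
  · rintro ⟨hz', hno⟩
    have hz'' : z ∈ P.alts.erase x := hz'
    rw [Finset.mem_erase] at hz''
    have hzS : z ∈ S := by
      by_contra hzS
      obtain ⟨f, hf, hf2⟩ := hIncoming' z hz''.2 hz''.1 hzS
      exact hno f hf hf2
    refine ⟨hz''.2, ?_⟩
    intro f hf hf2
    have hfS : f.2 ∈ S := by rw [hf2]; exact hzS
    exact hno f ((hInv.1 f hfS).1 hf) hf2
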